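/- With P the 2n×2n matrix of the previous statement, the maximum absolute row sum satisfies max_k Σ_{l=0}^{2n−1} |P(k,l)| ≤ C·log n for some absolute constant C and all n ≥ 2. -/

import Mathlib

open Matrix Complex Real

/-- The `2n`-point discrete Fourier transform matrix. -/
noncomputable def dftU (n : ℕ) : Matrix (Fin (2 * n)) (Fin (2 * n)) ℂ :=
  fun j k => ((1 / Real.sqrt (2 * n) : ℝ) : ℂ) *
    Complex.exp (2 * Real.pi * Complex.I * (j : ℕ) * (k : ℕ) / (2 * n))

/-- The diagonal projection onto the first `n` coordinates. -/
def Qproj (n : ℕ) : Matrix (Fin (2 * n)) (Fin (2 * n)) ℂ :=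
  Matrix.diagonal (fun i => if (i : ℕ) < n then (1 : ℂ) else 0)

/-- `P = U* Q U`. -/
noncomputable def Pmat (n : ℕ) : Matrix (Fin (2 * n)) (Fin (2 * n)) ℂ :=
  (dftU n)ᴴ * Qproj n * dftU n

lemma norm_geom_sum_le (N : ℕ) (z : ℂ) (hz : ‖z‖ = 1) (h1 : z ≠ 1) :
    ‖∑ m ∈ Finset.range N, z ^ m‖ ≤ 2 / ‖z - 1‖ := by
  rw [geom_sum_eq h1, norm_div]
  have hpos : 0 < ‖z - 1‖ := norm_pos_iff.mpr (sub_ne_zero.mpr h1)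
  have hnum : ‖z^N - 1‖ ≤ 2 := by
    calc ‖z^N - 1‖ ≤ ‖z^N‖ + ‖(1:ℂ)‖ := norm_sub_le _ _
    _ = 2 := by rw [norm_pow, hz]; norm_num
  gcongr

lemma norm_exp_mul_I_sub_one (θ : ℝ) :
    ‖Complex.exp ((θ:ℂ) * Complex.I) - 1‖ = 2 * |Real.sin (θ/2)| := by
  have h2 : ‖Complex.exp ((θ:ℂ) * Complex.I) - 1‖^2 = (2 * |Real.sin (θ/2)|)^2 := by
    rw [Complex.exp_mul_I, ← Complex.ofReal_cos, ← Complex.ofReal_sin,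
      Complex.sq_norm]
    simp only [Complex.normSq_apply, Complex.sub_re, Complex.add_re, Complex.ofReal_re,
      Complex.mul_re, Complex.I_re, Complex.I_im, Complex.ofReal_im, Complex.one_re,
      Complex.sub_im, Complex.add_im, Complex.mul_im, Complex.one_im]
    have hh := Real.sin_sq_eq_half_sub (θ/2)
    rw [show 2*(θ/2) = θ by ring] at hh
    have hc := Real.sin_sq_add_cos_sq θ
    have : |Real.sin (θ/2)|^2 = Real.sin (θ/2)^2 := sq_abs _
    nlinarith [hh, hc]
  rw [← Real.sqrt_sq (norm_nonneg _), h2, Real.sqrt_sq (by positivity)]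

lemma sin_lower {x : ℝ} (h0 : 0 ≤ x) (h1 : x ≤ π) :
    2/π^2 * (x * (π - x)) ≤ Real.sin x := by
  have hπ := Real.pi_pos
  rcases le_or_gt x (π/2) with h | h
  · calc 2/π^2 * (x * (π - x)) ≤ 2/π^2 * (x * π) :=
        mul_le_mul_of_nonneg_left (by nlinarith) (by positivity)
    _ = 2/π * x := by field_simp
    _ ≤ Real.sin x := Real.mul_le_sin h0 h
  · calc 2/π^2 * (x * (π - x)) ≤ 2/π^2 * (π * (π - x)) :=
        mul_le_mul_of_nonneg_left (by nlinarith) (by positivity)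
    _ = 2/π * (π - x) := by field_simp
    _ ≤ Real.sin (π - x) := Real.mul_le_sin (by linarith) (by linarith)
    _ = Real.sin x := Real.sin_pi_sub x

lemma exp_congr_mod (N : ℕ) (hN : 0 < N) (a : ℤ) (d : ℕ) (h : ∃ t : ℤ, a = (d:ℤ) + (N:ℤ) * t) :
    Complex.exp (2*(π:ℂ)*Complex.I*(a:ℂ)/(N:ℂ)) =
      Complex.exp (2*(π:ℂ)*Complex.I*(d:ℂ)/(N:ℂ)) := by
  have hNc : ((N:ℕ):ℂ) ≠ 0 := Nat.cast_ne_zero.mpr hN.ne'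
  obtain ⟨t, ht⟩ := h
  rw [ht]
  push_cast
  rw [show 2*(π:ℂ)*Complex.I*((d:ℂ) + (N:ℂ)*(t:ℂ))/(N:ℂ)
      = 2*(π:ℂ)*Complex.I*(d:ℂ)/(N:ℂ) + (t:ℂ)*(2*(π:ℂ)*Complex.I) by
    field_simp]
  rw [Complex.exp_add, Complex.exp_int_mul_two_pi_mul_I, mul_one]

lemma Pmat_apply (n : ℕ) (hn : 0 < n) (k l : Fin (2*n)) :
    Pmat n k l = ((1/(2*n) : ℝ) : ℂ) *
      ∑ m ∈ Finset.range n,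
        Complex.exp (2*Real.pi*Complex.I*(((l:ℕ):ℂ) - ((k:ℕ):ℂ))/(2*n)) ^ m := by
  have h2n : (0:ℝ) < 2*n := by positivity
  have h2nc : (2*(n:ℂ)) ≠ 0 := by
    simpa using (by exact_mod_cast h2n.ne' : (2*(n:ℝ):ℂ) ≠ 0)
  rw [Pmat, Matrix.mul_assoc]
  rw [Matrix.mul_apply]
  have hterm : ∀ m : ℕ, m < 2*n → ∀ hm : m < 2*n,
      (dftU n)ᴴ k ⟨m, hm⟩ * (Qproj n * dftU n) ⟨m, hm⟩ l =
      if m < n then ((1/(2*n) : ℝ) : ℂ) *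
        Complex.exp (2*Real.pi*Complex.I*(((l:ℕ):ℂ) - ((k:ℕ):ℂ))/(2*n)) ^ m else 0 := by
    intro m _ hm
    rw [Qproj, Matrix.diagonal_mul, Matrix.conjTranspose_apply]
    simp only [dftU]
    simp only [star_mul']
    by_cases h : m < n
    · rw [if_pos h, if_pos h, one_mul, ← Complex.exp_nat_mul]
      rw [show star (((1 / Real.sqrt (2 * n) : ℝ)) : ℂ) = (((1 / Real.sqrt (2 * n) : ℝ)) : ℂ) by
        simp [Complex.star_def, Complex.conj_ofReal]]
      rw [show star (Complex.exp (2 * Real.pi * Complex.I * ((⟨m,hm⟩ : Fin (2*n)) : ℕ) * (k:ℕ) / (2 * n))) =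
          Complex.exp (-(2 * Real.pi * Complex.I * (m:ℂ) * (k:ℕ) / (2 * n))) by
        rw [Complex.star_def, ← Complex.exp_conj]
        congr 1
        simp only [map_div₀, _root_.map_mul, map_ofNat, Complex.conj_ofReal, Complex.conj_I,
          Complex.conj_natCast]
        ring]
      rw [mul_mul_mul_comm, ← Complex.exp_add]
      congr 1
      · rw [← Complex.ofReal_mul]
        congr 1
        rw [div_mul_div_comm, one_mul, Real.mul_self_sqrt h2n.le]
      · congr 1
        ring
    · rw [if_neg h, if_neg h, zero_mul, mul_zero]
  calc (∑ x : Fin (2*n), (dftU n)ᴴ k x * (Qproj n * dftU n) x l)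
      = ∑ x : Fin (2*n), (if (x:ℕ) < n then ((1/(2*n) : ℝ) : ℂ) *
          Complex.exp (2*Real.pi*Complex.I*(((l:ℕ):ℂ) - ((k:ℕ):ℂ))/(2*n)) ^ (x:ℕ) else 0) :=
        Finset.sum_congr rfl (fun x _ => by simpa using hterm x x.2 x.2)
    _ = ∑ m ∈ Finset.range (2*n), (if m < n then ((1/(2*n) : ℝ) : ℂ) *
          Complex.exp (2*Real.pi*Complex.I*(((l:ℕ):ℂ) - ((k:ℕ):ℂ))/(2*n)) ^ m else 0) :=
        Fin.sum_univ_eq_sum_range (fun m => if m < n then ((1/(2*n) : ℝ) : ℂ) *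
          Complex.exp (2*Real.pi*Complex.I*(((l:ℕ):ℂ) - ((k:ℕ):ℂ))/(2*n)) ^ m else 0) (2*n)
    _ = ∑ m ∈ Finset.range n, (if m < n then ((1/(2*n) : ℝ) : ℂ) *
          Complex.exp (2*Real.pi*Complex.I*(((l:ℕ):ℂ) - ((k:ℕ):ℂ))/(2*n)) ^ m else 0) :=
        (Finset.sum_subset (Finset.range_subset_range.2 (by omega))
          (fun x _ hx => if_neg (by simp only [Finset.mem_range] at hx; omega))).symm
    _ = ∑ m ∈ Finset.range n, ((1/(2*n) : ℝ) : ℂ) *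
          Complex.exp (2*Real.pi*Complex.I*(((l:ℕ):ℂ) - ((k:ℕ):ℂ))/(2*n)) ^ m :=
        Finset.sum_congr rfl (fun m hm => if_pos (Finset.mem_range.mp hm))
    _ = _ := (Finset.mul_sum _ _ _).symm


lemma Pmat_diag (n : ℕ) (hn : 0 < n) (k : Fin (2*n)) : ‖Pmat n k k‖ ≤ 1/2 := by
  rw [Pmat_apply n hn k k]
  simp only [sub_self, mul_zero, zero_div, Complex.exp_zero, one_pow, Finset.sum_const,
    Finset.card_range, nsmul_eq_mul, mul_one, norm_mul, Complex.norm_real,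
    Complex.norm_natCast]
  rw [Real.norm_eq_abs, _root_.abs_of_nonneg (by positivity)]
  have hnn : ((n:ℝ)) ≠ 0 := Nat.cast_ne_zero.mpr hn.ne'
  rw [show (1/(2*(n:ℝ))) * n = 1/2 by field_simp]

lemma Pmat_entry_bound (n : ℕ) (hn : 0 < n) (k l : Fin (2*n)) (d : ℕ) (hd1 : 0 < d)
    (hd2 : d < 2*n)
    (hmod : ∃ t : ℤ, ((l:ℕ):ℤ) - ((k:ℕ):ℤ) = (d:ℤ) + ((2*n:ℕ):ℤ) * t) :
    ‖Pmat n k l‖ ≤ (n:ℝ)/((d:ℝ)*(2*(n:ℝ)-(d:ℝ))) := by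
  have hnn : ((n:ℝ)) ≠ 0 := Nat.cast_ne_zero.mpr hn.ne'
  have hπ := Real.pi_pos
  have hdR : (0:ℝ) < d := by exact_mod_cast hd1
  have hdR2 : (d:ℝ) < 2*(n:ℝ) := by exact_mod_cast hd2
  set θ : ℝ := π * d / n with hθ
  set z : ℂ := Complex.exp ((θ:ℂ) * Complex.I) with hzdef
  have hzeq : Complex.exp (2*(π:ℂ)*Complex.I*(((l:ℕ):ℂ) - ((k:ℕ):ℂ))/(2*(n:ℂ))) = z := by
    have e1 : Complex.exp (2*(π:ℂ)*Complex.I*(((l:ℕ):ℂ) - ((k:ℕ):ℂ))/(2*(n:ℂ)))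
        = Complex.exp (2*(π:ℂ)*Complex.I*(((((l:ℕ):ℤ) - ((k:ℕ):ℤ)):ℤ):ℂ)/(((2*n:ℕ)):ℂ)) := by
      congr 1
      push_cast
      ring
    rw [e1, exp_congr_mod (2*n) (by omega) _ d hmod]
    congr 1
    rw [hθ]
    push_cast
    field_simp
  have hz1 : ‖z‖ = 1 := by
    rw [hzdef]
    exact Complex.norm_exp_ofReal_mul_I θ
  have hsin : (d:ℝ)*(2*(n:ℝ)-(d:ℝ))/(2*(n:ℝ)^2) ≤ Real.sin (θ/2) := by
    have h0 : 0 ≤ θ/2 := by positivity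
    have h1 : θ/2 ≤ π := by
      rw [hθ, div_le_iff₀ (by positivity : (0:ℝ) < 2)]
      rw [div_le_iff₀ (by positivity : (0:ℝ) < (n:ℝ))] at *
      nlinarith
    have := sin_lower h0 h1
    refine le_trans (le_of_eq ?_) this
    rw [hθ]
    field_simp
  have hspos : 0 < Real.sin (θ/2) := by
    refine lt_of_lt_of_le ?_ hsin
    apply div_pos (mul_pos hdR (by linarith)) (by positivity)
  have hnorm : ‖z - 1‖ = 2*|Real.sin (θ/2)| := norm_exp_mul_I_sub_one θ
  have hzne : z ≠ 1 := by
    intro h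
    rw [h, sub_self, norm_zero] at hnorm
    have : |Real.sin (θ/2)| = 0 := by linarith
    rw [abs_eq_zero] at this
    linarith
  have hnormge : (d:ℝ)*(2*(n:ℝ)-(d:ℝ))/(n:ℝ)^2 ≤ ‖z - 1‖ := by
    rw [hnorm, abs_of_pos hspos]
    rw [show (d:ℝ)*(2*(n:ℝ)-(d:ℝ))/(n:ℝ)^2 = 2*((d:ℝ)*(2*(n:ℝ)-(d:ℝ))/(2*(n:ℝ)^2)) by
      field_simp]
    linarith
  have hDpos : (0:ℝ) < (d:ℝ)*(2*(n:ℝ)-(d:ℝ))/(n:ℝ)^2 := by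
    apply div_pos (mul_pos hdR (by linarith)) (by positivity)
  rw [Pmat_apply n hn k l, hzeq]
  rw [norm_mul, Complex.norm_real, Real.norm_eq_abs, _root_.abs_of_nonneg (by positivity)]
  calc (1/(2*(n:ℝ))) * ‖∑ m ∈ Finset.range n, z ^ m‖
      ≤ (1/(2*(n:ℝ))) * (2/‖z - 1‖) := by
        apply mul_le_mul_of_nonneg_left (norm_geom_sum_le n z hz1 hzne) (by positivity)
    _ ≤ (1/(2*(n:ℝ))) * (2/((d:ℝ)*(2*(n:ℝ)-(d:ℝ))/(n:ℝ)^2)) := by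
        apply mul_le_mul_of_nonneg_left _ (by positivity)
        exact div_le_div_of_nonneg_left (by norm_num) hDpos hnormge
    _ = (n:ℝ)/((d:ℝ)*(2*(n:ℝ)-(d:ℝ))) := by
        have hd0 : (d:ℝ) ≠ 0 := ne_of_gt hdR
        have hsub : (2*(n:ℝ)-(d:ℝ)) ≠ 0 := ne_of_gt (by linarith)
        rw [div_div_eq_mul_div]
        field_simp

/-- The maximum absolute row sum of `P` is `O(log n)`: there is an absolute constant `C`
with `max_k ∑_l |P(k,l)| ≤ C log n` for all `n ≥ 2`. -/
theorem Pmat_row_sum_le_log :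
    ∃ C : ℝ, ∀ n : ℕ, 2 ≤ n → ∀ k : Fin (2 * n),
      ∑ l : Fin (2 * n), ‖Pmat n k l‖ ≤ C * Real.log n := by
  use 5
  intro n hn k
  haveI : NeZero (2*n) := ⟨by omega⟩
  have hn0 : 0 < n := by omega
  have hnn : ((n:ℝ)) ≠ 0 := Nat.cast_ne_zero.mpr hn0.ne'
  have hre : ∑ l : Fin (2*n), ‖Pmat n k l‖ = ∑ d : Fin (2*n), ‖Pmat n k (k + d)‖ :=
    (Fintype.sum_equiv (Equiv.addLeft k) (fun d => ‖Pmat n k (k + d)‖)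
      (fun l => ‖Pmat n k l‖) (fun d => rfl)).symm
  rw [hre]
  set F : ℕ → ℝ := fun m => if m = 0 then (1/2:ℝ) else (n:ℝ)/((m:ℝ)*(2*(n:ℝ)-(m:ℝ))) with hF
  have hbd : ∀ d : Fin (2*n), ‖Pmat n k (k + d)‖ ≤ F (d:ℕ) := by
    intro d
    by_cases h0 : (d:ℕ) = 0
    · have hd0 : d = 0 := Fin.ext (by simp [h0])
      rw [hF]
      simp only [h0, if_pos rfl]
      rw [hd0, add_zero]
      exact Pmat_diag n hn0 k
    · have hval : ((k+d : Fin (2*n)):ℕ) = ((k:ℕ) + (d:ℕ)) % (2*n) := Fin.val_add k d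
      have hcase : ((k+d:Fin (2*n)):ℕ) = (k:ℕ) + (d:ℕ)
          ∨ ((k+d:Fin (2*n)):ℕ) + 2*n = (k:ℕ) + (d:ℕ) := by
        rcases Nat.lt_or_ge ((k:ℕ) + (d:ℕ)) (2*n) with hlt | hge
        · left; rw [hval, Nat.mod_eq_of_lt hlt]
        · right
          rw [hval, Nat.mod_eq_sub_mod hge, Nat.mod_eq_of_lt (by omega)]
          omega
      have hmod : ∃ t : ℤ, (((k+d:Fin (2*n)):ℕ):ℤ) - ((k:ℕ):ℤ) = ((d:ℕ):ℤ) + ((2*n:ℕ):ℤ)*t :=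
        hcase.elim (fun h => ⟨0, by push_cast; omega⟩) (fun h => ⟨-1, by push_cast; omega⟩)
      rw [hF]
      simp only [if_neg h0]
      exact Pmat_entry_bound n hn0 k (k+d) (d:ℕ) (Nat.pos_of_ne_zero h0) d.2 hmod
  have hS : ∑ m ∈ Finset.Ico 1 (2*n), 1/(m:ℝ) = ((harmonic (2*n-1) : ℚ) : ℝ) := by
    rw [Finset.sum_Ico_eq_sum_range]
    simp only [harmonic, Rat.cast_sum, Rat.cast_inv, Rat.cast_natCast]
    apply Finset.sum_congr rfl
    intro i _
    rw [one_div]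
    norm_num [add_comm]
  have hrefl : ∑ m ∈ Finset.Ico 1 (2*n), 1/(((2*n - m : ℕ)):ℝ)
      = ∑ m ∈ Finset.Ico 1 (2*n), 1/(m:ℝ) := by
    apply Finset.sum_nbij' (i := fun m => 2*n - m) (j := fun m => 2*n - m)
    · intro a ha
      simp only [Finset.mem_Ico] at ha ⊢
      omega
    · intro a ha
      simp only [Finset.mem_Ico] at ha ⊢
      omega
    · intro a ha
      simp only [Finset.mem_Ico] at ha
      omega
    · intro a ha
      simp only [Finset.mem_Ico] at ha
      omega
    · intro a ha
      rfl
  calc (∑ d : Fin (2*n), ‖Pmat n k (k + d)‖) ≤ ∑ d : Fin (2*n), F (d:ℕ) :=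
        Finset.sum_le_sum (fun d _ => hbd d)
    _ = ∑ m ∈ Finset.range (2*n), F m := Fin.sum_univ_eq_sum_range F (2*n)
    _ = F 0 + ∑ m ∈ Finset.Ico 1 (2*n), F m := by
        rw [Finset.range_eq_Ico, Finset.sum_eq_sum_Ico_succ_bot (by omega)]
    _ ≤ 1/2 + ∑ m ∈ Finset.Ico 1 (2*n), (1/2)*(1/(m:ℝ) + 1/(((2*n - m : ℕ)):ℝ)) := by
        have hF0 : F 0 = 1/2 := by simp [hF]
        rw [hF0]
        apply add_le_add_right
        apply Finset.sum_le_sum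
        intro m hm
        simp only [Finset.mem_Ico] at hm
        have hm1 : (1:ℝ) ≤ (m:ℝ) := by exact_mod_cast hm.1
        have hm2 : (m:ℝ) < 2*(n:ℝ) := by exact_mod_cast hm.2
        rw [hF]
        simp only [if_neg (by omega : ¬ m = 0)]
        apply le_of_eq
        rw [Nat.cast_sub (by omega : m ≤ 2*n)]
        push_cast
        have e1 : (m:ℝ) ≠ 0 := by linarith
        have e2 : 2*(n:ℝ) - (m:ℝ) ≠ 0 := by linarith
        field_simp
        rw [one_add_div (by linarith)]
        ring_nf
    _ = 1/2 + (1/2)*((∑ m ∈ Finset.Ico 1 (2*n), 1/(m:ℝ))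
          + ∑ m ∈ Finset.Ico 1 (2*n), 1/(((2*n - m : ℕ)):ℝ)) := by
        rw [← Finset.mul_sum, Finset.sum_add_distrib]
    _ = 1/2 + ((harmonic (2*n-1) : ℚ) : ℝ) := by rw [hrefl, hS]; ring
    _ ≤ 1/2 + (1 + Real.log (2*n-1 : ℕ)) := by
        have := harmonic_le_one_add_log (2*n-1)
        linarith
    _ ≤ 5 * Real.log n := by
        have h1 : Real.log ((2*n-1 : ℕ):ℝ) ≤ Real.log (2*(n:ℝ)) := by
          apply Real.log_le_log (by exact_mod_cast (by omega : 0 < 2*n-1))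
          push_cast [Nat.cast_sub (by omega : 1 ≤ 2*n)]
          linarith
        have h2 : Real.log (2*(n:ℝ)) = Real.log 2 + Real.log n :=
          Real.log_mul two_ne_zero hnn
        have h3 : Real.log 2 ≤ Real.log n := by
          apply Real.log_le_log (by norm_num)
          exact_mod_cast hn
        have h4 := Real.log_two_gt_d9
        have h5 := Real.log_two_lt_d9
        linarith
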